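/- Let (G,E) be a contracting self-similar groupoid action on a finite directed graph E, with nucleus N, and let q : E^{-∞} → J be the quotient map onto the limit space. If there exist g ∈ N and finite paths μ, ν ∈ E* with g·μ = ν, then q(Z(μ]) ∩ q(Z(ν]) is nonempty, where Z(μ] = { x ∈ E^{-∞} : x_{-|μ|}…x_{-1} = μ }. -/

import Mathlib

/-!
Self-similar groupoid actions on finite directed graphs, following
Brownlowe–Buss–Gonçalves–Hume–Sims–Whittaker,
"KK-duality for self-similar groupoid actions on graphs".

A directed graph is given by a vertex type `V`, an edge type `E` and
range/source maps `rE sE : E → V`.  A finite path is modelled as a list of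
edges together with a base vertex (its range): the list `[e₁, …, eₙ]` is the
path `e₁ … eₙ` read from left to right, so consecutive edges satisfy
`sE eᵢ = rE eᵢ₊₁`.  The groupoid of a self-similar action, its partial
multiplication, the action on finite paths and the restriction maps are
modelled as total functions whose values are only constrained (by the axioms
of the structure `SSA`) on their natural domains.
-/

universe u

namespace SSG

variable {V E : Type u}

/-- `l` is a trail: the source of each edge is the range of the next. -/
def IsTrail (rE sE : E → V) (l : List E) : Prop :=
  List.Chain' (fun e f => sE e = rE f) l

/-- `FromV rE sE v l` : `l` is a finite path whose range (leftmost vertex) is `v`. -/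
def FromV (rE sE : E → V) (v : V) (l : List E) : Prop :=
  IsTrail rE sE l ∧ ∀ e, l.head? = some e → rE e = v

/-- The source (rightmost vertex) of the finite path `l` with range `v`. -/
def trailSrc (sE : E → V) (v : V) (l : List E) : V :=
  l.getLast?.elim v sE

/-- A (faithful) self-similar groupoid action `(G, E)` on the directed graph with
vertices `V`, edges `E`, range map `rE` and source map `sE`.  Here `d`/`c` are
the domain/codomain maps of the groupoid `G` (its units are `unit v` for
`v : V`), `mul h g` is the composite `h ∘ g` (junk unless `d h = c g`),
`act g l` is `g · l` for finite paths `l` with range `d g` (junk otherwise)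
and `res g l` is the restriction `g|_l` (junk otherwise). -/
structure SSA (V E : Type u) (rE sE : E → V) : Type (u + 1) where
  G : Type u
  d : G → V
  c : G → V
  mul : G → G → G
  inv : G → G
  unit : V → G
  act : G → List E → List E
  res : G → List E → G
  d_unit : ∀ v, d (unit v) = v
  c_unit : ∀ v, c (unit v) = v
  d_mul : ∀ g h, d h = c g → d (mul h g) = d g
  c_mul : ∀ g h, d h = c g → c (mul h g) = c h
  mul_assoc : ∀ g h k, d h = c g → d k = c h → mul k (mul h g) = mul (mul k h) g
  unit_mul : ∀ g, mul (unit (c g)) g = g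
  mul_unit : ∀ g, mul g (unit (d g)) = g
  d_inv : ∀ g, d (inv g) = c g
  c_inv : ∀ g, c (inv g) = d g
  inv_mul : ∀ g, mul (inv g) g = unit (d g)
  mul_inv : ∀ g, mul g (inv g) = unit (c g)
  act_fromV : ∀ g l, FromV rE sE (d g) l → FromV rE sE (c g) (act g l)
  act_length : ∀ g l, FromV rE sE (d g) l → (act g l).length = l.length
  act_unit : ∀ v l, FromV rE sE v l → act (unit v) l = l
  act_mul : ∀ g h l, d h = c g → FromV rE sE (d g) l →
    act (mul h g) l = act h (act g l)
  faithful : ∀ g h, d g = d h → c g = c h →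
    (∀ l, FromV rE sE (d g) l → act g l = act h l) → g = h
  res_nil : ∀ g, res g [] = g
  d_res : ∀ g l, FromV rE sE (d g) l → d (res g l) = trailSrc sE (d g) l
  c_res : ∀ g l, FromV rE sE (d g) l → c (res g l) = trailSrc sE (c g) (act g l)
  res_append : ∀ g l m, FromV rE sE (d g) l →
    FromV rE sE (trailSrc sE (d g) l) m → res g (l ++ m) = res (res g l) m
  act_append : ∀ g l m, FromV rE sE (d g) l →
    FromV rE sE (trailSrc sE (d g) l) m →
    act g (l ++ m) = act g l ++ act (res g l) m

variable {rE sE : E → V}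

/-- `F` is a contracting core for the self-similar groupoid action `A`. -/
def SSA.IsCore (A : SSA V E rE sE) (F : Set A.G) : Prop :=
  F.Finite ∧ ∀ g : A.G, ∃ n : ℕ, ∀ l : List E,
    FromV rE sE (A.d g) l → l.length = n → A.res g l ∈ F

/-- The action is contracting if it admits a contracting core. -/
def SSA.Contracting (A : SSA V E rE sE) : Prop :=
  ∃ F : Set A.G, A.IsCore F

/-- The nucleus: the intersection of all contracting cores. -/
def SSA.nucleus (A : SSA V E rE sE) : Set A.G :=
  ⋂₀ {F : Set A.G | A.IsCore F}

/-- The action is recurrent. -/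
def SSA.Recurrent (A : SSA V E rE sE) : Prop :=
  ∀ e f : E, ∀ h : A.G, A.d h = sE e → A.c h = sE f →
    ∃ g : A.G, A.d g = rE e ∧ A.act g [e] = [f] ∧ A.res g [e] = h

/-- The action is level-transitive: any two paths of the same length lie in
one orbit. -/
def SSA.LevelTransitive (A : SSA V E rE sE) : Prop :=
  ∀ (v w : V) (l m : List E), FromV rE sE v l → FromV rE sE w m →
    l.length = m.length → ∃ g : A.G, A.d g = v ∧ A.c g = w ∧ A.act g l = m

/-- Every element of the groupoid is a finite composable product of
elements of `H`. -/
def SSA.GeneratedBy (A : SSA V E rE sE) (H : Set A.G) : Prop :=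
  ∀ g : A.G, ∃ (h : A.G) (t : List A.G), h ∈ H ∧ (∀ k ∈ t, k ∈ H) ∧
    List.Chain' (fun a b => A.d a = A.c b) (h :: t) ∧ t.foldl A.mul h = g

/-- The groupoid of the action is finitely generated. -/
def SSA.FinitelyGenerated (A : SSA V E rE sE) : Prop :=
  ∃ H : Set A.G, H.Finite ∧ A.GeneratedBy H

/-- The graph has no sources: every vertex receives an edge. -/
def NoSources (rE : E → V) : Prop := ∀ v : V, ∃ e : E, rE e = v

/-- The graph has no sinks: every vertex emits an edge. -/
def NoSinks (sE : E → V) : Prop := ∀ v : V, ∃ e : E, sE e = v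

/-- The graph is strongly connected: it has an edge, and any ordered pair of
vertices is joined by a finite path. -/
def StronglyConnected (rE sE : E → V) : Prop :=
  Nonempty E ∧ ∀ v w : V, ∃ l : List E, FromV rE sE v l ∧ trailSrc sE v l = w

/-- Right-infinite paths `y₁ y₂ y₃ …` (here `y k` is the edge `y_{k+1}`). -/
def RightPath (rE sE : E → V) : Type u :=
  {y : ℕ → E // ∀ k, sE (y k) = rE (y (k + 1))}

/-- The initial segment `y₁ … yₙ` of a right-infinite path. -/
def RightPath.trunc (y : RightPath rE sE) (n : ℕ) : List E :=
  (List.range n).map y.1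

/-- The action is regular: whenever `g` fixes a right-infinite path `y`
(equivalently, all its initial segments), `g` acts trivially on some cylinder
neighbourhood of `y`: some initial segment `μ` of `y` satisfies `g·μ = μ` and
`g|_μ = s(μ)`. -/
def SSA.Regular (A : SSA V E rE sE) : Prop :=
  ∀ (g : A.G) (y : RightPath rE sE), A.d g = rE (y.1 0) →
    (∀ n : ℕ, A.act g (y.trunc n) = y.trunc n) →
    ∃ n : ℕ, A.act g (y.trunc n) = y.trunc n ∧
      A.res g (y.trunc n) = A.unit (trailSrc sE (A.d g) (y.trunc n))

/-- Left-infinite paths `… x₋₂ x₋₁` (here `x k` is the edge `x_{-(k+1)}`). -/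
def LeftPath (rE sE : E → V) : Type u :=
  {x : ℕ → E // ∀ k, sE (x (k + 1)) = rE (x k)}

instance [TopologicalSpace E] : TopologicalSpace (LeftPath rE sE) :=
  inferInstanceAs (TopologicalSpace {x : ℕ → E // ∀ k, sE (x (k + 1)) = rE (x k)})

/-- The finite path `x₋ₘ … x₋₁`. -/
def LeftPath.trunc (x : LeftPath rE sE) (m : ℕ) : List E :=
  ((List.range m).reverse).map x.1

/-- The shift on left-infinite paths, deleting the rightmost edge. -/
def LeftPath.shift (x : LeftPath rE sE) : LeftPath rE sE :=
  ⟨fun k => x.1 (k + 1), fun k => x.2 (k + 1)⟩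

/-- Asymptotic equivalence of left-infinite paths: some sequence `(gₙ)` in the
groupoid with finitely many distinct values satisfies
`gₙ · (xₙ … x₋₁) = yₙ … y₋₁` for all `n < 0`. -/
def SSA.AsympEq (A : SSA V E rE sE) (x y : LeftPath rE sE) : Prop :=
  ∃ g : ℕ → A.G, (Set.range g).Finite ∧
    (∀ m : ℕ, A.d (g m) = rE (x.1 m)) ∧
    (∀ m : ℕ, A.act (g m) (x.trunc (m + 1)) = y.trunc (m + 1))

/-- The cylinder set `Z(l]` of left-infinite paths ending in `l`. -/
def cylL (rE sE : E → V) (l : List E) : Set (LeftPath rE sE) :=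
  {x : LeftPath rE sE | x.trunc l.length = l}

/-- The basic subset `U_l` of the limit space attached to a finite path `l`
with range `v`. -/
def SSA.limitU (A : SSA V E rE sE) (v : V) (l : List E) :
    Set (Quot A.AsympEq) :=
  {z : Quot A.AsympEq | ∀ x : LeftPath rE sE, Quot.mk A.AsympEq x = z →
    ∃ g ∈ A.nucleus, A.d g = v ∧ x ∈ cylL rE sE (A.act g l)}

/-- Bi-infinite paths `… x₋₁ x₀ x₁ …`. -/
def BiPath (rE sE : E → V) : Type u :=
  {x : ℤ → E // ∀ k : ℤ, sE (x k) = rE (x (k + 1))}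

instance [TopologicalSpace E] : TopologicalSpace (BiPath rE sE) :=
  inferInstanceAs (TopologicalSpace {x : ℤ → E // ∀ k : ℤ, sE (x k) = rE (x (k + 1))})

/-- The finite segment `xₙ x_{n+1} … x_{n+m-1}` of a bi-infinite path. -/
def BiPath.seg (x : BiPath rE sE) (n : ℤ) (m : ℕ) : List E :=
  (List.range m).map fun i => x.1 (n + i)

/-- Asymptotic equivalence of bi-infinite paths: some sequence `(gₙ)_{n ∈ ℤ}`
with finitely many distinct values satisfies
`gₙ · (xₙ x_{n+1} …) = yₙ y_{n+1} …` for all `n`. -/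
def SSA.AsympEqZ (A : SSA V E rE sE) (x y : BiPath rE sE) : Prop :=
  ∃ g : ℤ → A.G, (Set.range g).Finite ∧
    (∀ n : ℤ, A.d (g n) = rE (x.1 n)) ∧
    (∀ (n : ℤ) (m : ℕ), A.act (g n) (x.seg n m) = y.seg n m)

/-- The left-infinite path `x(-∞, n) = … x_{n-1} xₙ` of a bi-infinite path. -/
def BiPath.tail (x : BiPath rE sE) (n : ℤ) : LeftPath rE sE :=
  ⟨fun k => x.1 (n - k), by
    intro k
    have h := x.2 (n - ((k : ℤ) + 1))
    have h2 : n - ((k : ℤ) + 1) + 1 = n - (k : ℤ) := by ring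
    have h3 : (n - ((k + 1 : ℕ) : ℤ)) = n - ((k : ℤ) + 1) := by push_cast; ring
    show sE (x.1 (n - ((k + 1 : ℕ) : ℤ))) = rE (x.1 (n - (k : ℤ)))
    rw [h3, ← h2]
    exact h⟩

/-- The translation `τ` on bi-infinite paths, `(τ x)ₙ = x_{n-1}`. -/
def BiPath.translate (x : BiPath rE sE) : BiPath rE sE :=
  ⟨fun m => x.1 (m - 1), by
    intro k
    have h := x.2 (k - 1)
    have h2 : (k - 1 + 1 : ℤ) = k + 1 - 1 := by ring
    rw [h2] at h
    exact h⟩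

/-- The shift homeomorphism `σ̃_∞` on the inverse limit `lim← (J, T)`. -/
def solShift {J : Type*} (T : J → J)
    (z : {z : ℕ → J // ∀ n, T (z (n + 1)) = z n}) :
    {z : ℕ → J // ∀ n, T (z (n + 1)) = z n} :=
  ⟨fun n => match n with
    | 0 => T (z.1 0)
    | m + 1 => z.1 m,
   fun n => match n with
    | 0 => rfl
    | m + 1 => z.2 m⟩

/-- The distance function of a bundled metric space. -/
def mdist {Y : Type*} (m : MetricSpace Y) (a b : Y) : ℝ := by
  letI := m; exact dist a b

/-- The open ball of a bundled metric space. -/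
def mball {Y : Type*} (m : MetricSpace Y) (a : Y) (r : ℝ) : Set Y := by
  letI := m; exact Metric.ball a r

/-- The topology induced by a bundled metric space. -/
def mtop {Y : Type*} (m : MetricSpace Y) : TopologicalSpace Y := by
  letI := m; exact inferInstance


/-! ### Auxiliary lemmas -/

section Aux

variable {V E : Type u} {rE sE : E → V}

lemma fromV_nil (v : V) : FromV rE sE v ([] : List E) :=
  ⟨List.isChain_nil, by simp⟩

lemma fromV_cons {v : V} {a : E} {l : List E} :
    FromV rE sE v (a :: l) ↔ rE a = v ∧ FromV rE sE (sE a) l := by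
  unfold FromV IsTrail List.Chain'
  rw [List.isChain_cons]
  constructor
  · rintro ⟨⟨h1, h2⟩, hh⟩
    exact ⟨hh a rfl, h2, fun e he => (h1 e he).symm⟩
  · rintro ⟨ha, h2, hh⟩
    exact ⟨⟨fun b hb => (hh b hb).symm, h2⟩, fun e he => by
      injection he with h'; subst h'; exact ha⟩

lemma fromV_single {v : V} {e : E} : FromV rE sE v [e] ↔ rE e = v := by
  rw [fromV_cons]
  exact ⟨fun h => h.1, fun h => ⟨h, fromV_nil _⟩⟩

lemma trailSrc_nil (v : V) : trailSrc sE v ([] : List E) = v := rfl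

lemma trailSrc_cons (v : V) (a : E) (l : List E) :
    trailSrc sE v (a :: l) = trailSrc sE (sE a) l := by
  cases l with
  | nil => rfl
  | cons b m =>
    unfold trailSrc
    rw [List.getLast?_cons_cons, List.getLast?_eq_getLast (l := b :: m) (by simp)]
    rfl

lemma trailSrc_single (v : V) (e : E) : trailSrc sE v [e] = sE e := rfl

lemma trailSrc_append (v : V) (l m : List E) :
    trailSrc sE v (l ++ m) = trailSrc sE (trailSrc sE v l) m := by
  induction l generalizing v with
  | nil => rfl
  | cons a l ih => rw [List.cons_append, trailSrc_cons, trailSrc_cons, ih]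

lemma fromV_append {v : V} {l m : List E} :
    FromV rE sE v (l ++ m) ↔ FromV rE sE v l ∧ FromV rE sE (trailSrc sE v l) m := by
  induction l generalizing v with
  | nil =>
    rw [List.nil_append, trailSrc_nil]
    exact (and_iff_right (fromV_nil v)).symm
  | cons a l ih =>
    rw [List.cons_append, fromV_cons, ih, fromV_cons, trailSrc_cons, and_assoc]

/-- The source of a proper prefix is the range of the next edge. -/
lemma trailSrc_take {v : V} {l : List E} (hl : FromV rE sE v l) {p : ℕ} {e : E}
    (he : (l.drop p).head? = some e) :
    trailSrc sE v (l.take p) = rE e := by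
  induction l generalizing v p with
  | nil => simp at he
  | cons a l ih =>
    cases p with
    | zero =>
      simp only [List.drop_zero, List.head?_cons] at he
      injection he with h'
      subst h'
      rw [List.take_zero, trailSrc_nil, (fromV_cons.mp hl).1]
    | succ q =>
      rw [List.take_succ_cons, trailSrc_cons]
      exact ih (fromV_cons.mp hl).2 he

lemma length_one_eq {α : Type*} {l : List α} (h : l.length = 1) :
    ∃ a : α, l = [a] := by
  cases l with
  | nil => simp at h
  | cons a t =>
    cases t with
    | nil => exact ⟨a, rfl⟩
    | cons b t => simp at h

end Aux

section Split

variable {V E : Type u} {rE sE : E → V}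

/-- Splitting a path into a prefix and suffix, for restriction and action. -/
lemma SSA.split (A : SSA V E rE sE) (g : A.G) (l : List E) (j : ℕ)
    (hl : FromV rE sE (A.d g) l) :
    FromV rE sE (A.d g) (l.take j) ∧
    FromV rE sE (A.d (A.res g (l.take j))) (l.drop j) ∧
    A.res g l = A.res (A.res g (l.take j)) (l.drop j) ∧
    A.act g l = A.act g (l.take j) ++ A.act (A.res g (l.take j)) (l.drop j) := by
  have hld : l = l.take j ++ l.drop j := (List.take_append_drop j l).symm
  have h1 : FromV rE sE (A.d g) (l.take j) ∧
      FromV rE sE (trailSrc sE (A.d g) (l.take j)) (l.drop j) :=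
    fromV_append.mp (hld ▸ hl)
  have hd : A.d (A.res g (l.take j)) = trailSrc sE (A.d g) (l.take j) :=
    A.d_res _ _ h1.1
  refine ⟨h1.1, by rw [hd]; exact h1.2, ?_, ?_⟩
  · conv_lhs => rw [hld]
    exact A.res_append g _ _ h1.1 h1.2
  · conv_lhs => rw [hld]
    exact A.act_append g _ _ h1.1 h1.2

end Split

section Core

variable {V E : Type u} {rE sE : E → V}

/-- All restrictions of elements of `F`. -/
def SSA.resSet (A : SSA V E rE sE) (F : Set A.G) : Set A.G :=
  {h | ∃ f ∈ F, ∃ l, FromV rE sE (A.d f) l ∧ A.res f l = h}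

lemma SSA.mem_resSet (A : SSA V E rE sE) {F : Set A.G} {f : A.G} (hf : f ∈ F) :
    f ∈ A.resSet F :=
  ⟨f, hf, [], fromV_nil _, A.res_nil f⟩

lemma SSA.resSet_closed (A : SSA V E rE sE) {F : Set A.G} {h : A.G} {l : List E}
    (hh : h ∈ A.resSet F) (hl : FromV rE sE (A.d h) l) : A.res h l ∈ A.resSet F := by
  obtain ⟨f, hf, p, hp, rfl⟩ := hh
  have hd : A.d (A.res f p) = trailSrc sE (A.d f) p := A.d_res _ _ hp
  have hl' : FromV rE sE (trailSrc sE (A.d f) p) l := by rw [← hd]; exact hl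
  exact ⟨f, hf, p ++ l, fromV_append.mpr ⟨hp, hl'⟩, A.res_append f p l hp hl'⟩

lemma SSA.resSet_finite [Finite E] (A : SSA V E rE sE) {F : Set A.G}
    (hF : A.IsCore F) : (A.resSet F).Finite := by
  classical
  choose n₁ hn₁ using hF.2
  obtain ⟨N, hN⟩ := (((hF.1.prod (Set.finite_univ (α := E)))).image
    (fun p : A.G × E => n₁ (A.res p.1 [p.2]))).bddAbove
  have hN' : ∀ f ∈ F, ∀ e : E, n₁ (A.res f [e]) ≤ N := fun f hf e =>
    hN ⟨(f, e), ⟨hf, trivial⟩, rfl⟩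
  have key : ∀ n (l : List E) (f : A.G), f ∈ F → FromV rE sE (A.d f) l →
      l.length ≤ n → ∃ f' ∈ F, ∃ l', FromV rE sE (A.d f') l' ∧
        l'.length ≤ N + 1 ∧ A.res f' l' = A.res f l := by
    intro n
    induction n using Nat.strong_induction_on with
    | _ n ih =>
      intro l f hf hl hlen
      by_cases hle : l.length ≤ N + 1
      · exact ⟨f, hf, l, hl, hle, rfl⟩
      · cases l with
        | nil => simp at hle
        | cons e l' =>
          have hc := fromV_cons.mp hl
          have hfe : FromV rE sE (A.d f) [e] := fromV_single.mpr hc.1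
          set h1 := A.res f [e] with hh1
          have hd1 : A.d h1 = sE e := by
            rw [hh1, A.d_res f [e] hfe, trailSrc_single]
          have hl1 : FromV rE sE (A.d h1) l' := by rw [hd1]; exact hc.2
          have hlen' : N + 1 ≤ l'.length := by
            simp only [List.length_cons] at hle; omega
          have hk : n₁ h1 ≤ N := hN' f hf e
          obtain ⟨ht1, ht2, ht3, -⟩ := A.split h1 l' (n₁ h1) hl1
          have hf' : A.res h1 (l'.take (n₁ h1)) ∈ F :=
            hn₁ h1 _ ht1 (by rw [List.length_take]; omega)
          have hres1 : A.res f (e :: l') = A.res h1 l' := by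
            have he : (e : E) :: l' = [e] ++ l' := rfl
            rw [he, A.res_append f [e] l' hfe (by rw [trailSrc_single]; exact hc.2)]
          have hdlen : (l'.drop (n₁ h1)).length < n := by
            rw [List.length_drop]
            simp only [List.length_cons] at hlen
            omega
          obtain ⟨f'', hf'', l'', h1'', h2'', h3''⟩ :=
            ih _ hdlen (l'.drop (n₁ h1)) _ hf' ht2 le_rfl
          exact ⟨f'', hf'', l'', h1'', h2'', by rw [h3'', ← ht3, ← hres1]⟩
  have hsub : A.resSet F ⊆ (fun p : A.G × List E => A.res p.1 p.2) ''
      (F ×ˢ {l : List E | l.length ≤ N + 1}) := by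
    rintro h ⟨f, hf, l, hl, rfl⟩
    obtain ⟨f', hf', l', h1', h2', h3'⟩ := key l.length l f hf hl le_rfl
    exact ⟨(f', l'), ⟨hf', h2'⟩, h3'⟩
  exact Set.Finite.subset ((hF.1.prod (List.finite_length_le E (N + 1))).image _) hsub

lemma SSA.resSet_core [Finite E] (A : SSA V E rE sE) {F : Set A.G}
    (hF : A.IsCore F) : A.IsCore (A.resSet F) := by
  refine ⟨A.resSet_finite hF, fun g => ?_⟩
  obtain ⟨n, hn⟩ := hF.2 g
  exact ⟨n, fun l h1 h2 => A.mem_resSet (hn l h1 h2)⟩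

/-- Elements of `S` with predecessors in `S` at every depth. -/
def SSA.persist (A : SSA V E rE sE) (S : Set A.G) : Set A.G :=
  {h | h ∈ S ∧ ∀ k : ℕ, ∃ f ∈ S, ∃ l, FromV rE sE (A.d f) l ∧
    l.length = k ∧ A.res f l = h}

lemma SSA.deep_mem (A : SSA V E rE sE) {S : Set A.G}
    (hcl : ∀ h ∈ S, ∀ l, FromV rE sE (A.d h) l → A.res h l ∈ S)
    {g : A.G} {n₀ : ℕ}
    (hn₀ : ∀ l, FromV rE sE (A.d g) l → l.length = n₀ → A.res g l ∈ S) :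
    ∀ l, FromV rE sE (A.d g) l → n₀ ≤ l.length → A.res g l ∈ S := by
  intro l hl hlen
  obtain ⟨h1, h2, h3, -⟩ := A.split g l n₀ hl
  rw [h3]
  exact hcl _ (hn₀ _ h1 (by rw [List.length_take]; omega)) _ h2

lemma pigeon {α : Type*} {S : Set α} (hS : S.Finite) (c : ℕ → α)
    (hc : ∀ n, c n ∈ S) : ∃ a ∈ S, {n | c n = a}.Infinite := by
  haveI := hS.to_subtype
  obtain ⟨y, hy⟩ := Finite.exists_infinite_fiber (fun n => (⟨c n, hc n⟩ : S))
  refine ⟨y.1, y.2, ?_⟩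
  have hsub : (fun n => (⟨c n, hc n⟩ : S)) ⁻¹' {y} ⊆ {n | c n = ↑y} := by
    intro n hn
    simpa [Subtype.ext_iff] using hn
  exact (Set.infinite_coe_iff.mp hy).mono hsub

lemma SSA.persist_core (A : SSA V E rE sE) {S : Set A.G} (hSfin : S.Finite)
    (hScore : ∀ g : A.G, ∃ n, ∀ l, FromV rE sE (A.d g) l → l.length = n →
      A.res g l ∈ S)
    (hcl : ∀ h ∈ S, ∀ l, FromV rE sE (A.d h) l → A.res h l ∈ S) :
    A.IsCore (A.persist S) := by
  refine ⟨hSfin.subset (fun h hh => hh.1), fun g => ?_⟩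
  obtain ⟨n₀, hn₀⟩ := hScore g
  by_contra hcon
  push_neg at hcon
  choose lf hlf1 hlf2 hlf3 using hcon
  set c : ℕ → A.G := fun n => A.res g (lf (n₀ + n)) with hc
  have hcS : ∀ n, c n ∈ S := fun n =>
    A.deep_mem hcl hn₀ _ (hlf1 _) (by rw [hlf2]; omega)
  obtain ⟨p, hpS, hp⟩ := pigeon hSfin c hcS
  have hpnot : p ∉ A.persist S := by
    obtain ⟨n, hn⟩ := hp.nonempty
    rw [← hn]
    exact hlf3 _
  apply hpnot
  refine ⟨hpS, fun k => ?_⟩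
  obtain ⟨n, hn_mem, hnk⟩ := hp.exists_gt k
  have hn_mem' : A.res g (lf (n₀ + n)) = p := hn_mem
  set l := lf (n₀ + n) with hldef
  have hlen : l.length = n₀ + n := hlf2 _
  obtain ⟨h1, h2, h3, -⟩ := A.split g l (n₀ + n - k) (hlf1 _)
  refine ⟨A.res g (l.take (n₀ + n - k)), ?_, l.drop (n₀ + n - k), h2, ?_, ?_⟩
  · exact A.deep_mem hcl hn₀ _ h1 (by rw [List.length_take]; omega)
  · rw [List.length_drop]; omega
  · rw [← h3, hn_mem']

lemma SSA.persist_backstep [Finite E] (A : SSA V E rE sE) {S : Set A.G} (hSfin : S.Finite)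
    (hcl : ∀ h ∈ S, ∀ l, FromV rE sE (A.d h) l → A.res h l ∈ S)
    {h : A.G} (hh : h ∈ A.persist S) :
    ∃ p ∈ A.persist S, ∃ e : E, rE e = A.d p ∧ A.res p [e] = h := by
  obtain ⟨hhS, hdeep⟩ := hh
  have hex : ∀ k : ℕ, ∃ q : A.G × E, (q.1 ∈ S ∧ rE q.2 = A.d q.1 ∧
      A.res q.1 [q.2] = h) ∧ ∃ f ∈ S, ∃ m, FromV rE sE (A.d f) m ∧
      m.length = k ∧ A.res f m = q.1 := by
    intro k
    obtain ⟨f, hfS, l, hl, hlen, hres⟩ := hdeep (k + 1)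
    obtain ⟨h1, h2, h3, -⟩ := A.split f l k hl
    have hdl : (l.drop k).length = 1 := by rw [List.length_drop]; omega
    obtain ⟨e, hde⟩ := length_one_eq hdl
    set p := A.res f (l.take k) with hpdef
    have hpS : p ∈ S := hcl f hfS _ h1
    have hfv : FromV rE sE (A.d p) [e] := by rw [← hde]; exact h2
    refine ⟨(p, e), ⟨hpS, fromV_single.mp hfv, ?_⟩, f, hfS, l.take k, h1,
      by rw [List.length_take]; omega, rfl⟩
    rw [← hres, h3, hde]
  choose q hq1 hq2 using hex
  obtain ⟨a, -, ha⟩ := pigeon (hSfin.prod (Set.finite_univ (α := E))) q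
    (fun k => ⟨(hq1 k).1, trivial⟩)
  obtain ⟨k₀, hk₀⟩ := ha.nonempty
  have hk₀' : q k₀ = a := hk₀
  refine ⟨a.1, ⟨by rw [← hk₀']; exact (hq1 k₀).1, fun k => ?_⟩, a.2,
    by rw [← hk₀']; exact (hq1 k₀).2.1, by rw [← hk₀']; exact (hq1 k₀).2.2⟩
  obtain ⟨n, hn_mem, hnk⟩ := ha.exists_gt k
  have hn' : q n = a := hn_mem
  obtain ⟨f, hfS, m, hm1, hm2, hm3⟩ := hq2 n
  obtain ⟨g1, g2, g3, -⟩ := A.split f m (n - k) hm1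
  refine ⟨A.res f (m.take (n - k)), hcl f hfS _ g1, m.drop (n - k), g2, ?_, ?_⟩
  · rw [List.length_drop]; omega
  · rw [← g3, hm3, hn']

end Core

section Paths

variable {V E : Type u} {rE sE : E → V}

lemma LeftPath.trunc_zero (x : LeftPath rE sE) : x.trunc 0 = [] := rfl

lemma LeftPath.trunc_succ (x : LeftPath rE sE) (n : ℕ) :
    x.trunc (n + 1) = x.1 n :: x.trunc n := by
  simp [LeftPath.trunc, List.range_succ]

lemma LeftPath.trunc_length (x : LeftPath rE sE) (n : ℕ) :
    (x.trunc n).length = n := by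
  simp [LeftPath.trunc]

lemma LeftPath.trunc_fromV (x : LeftPath rE sE) (n : ℕ) :
    FromV rE sE (rE (x.1 n)) (x.trunc (n + 1)) := by
  induction n with
  | zero => rw [x.trunc_succ 0]; exact fromV_cons.mpr ⟨rfl, fromV_nil _⟩
  | succ k ih =>
    rw [x.trunc_succ (k + 1)]
    refine fromV_cons.mpr ⟨rfl, ?_⟩
    rw [x.2 k]
    exact ih

lemma LeftPath.trunc_trailSrc (x : LeftPath rE sE) (k : ℕ) (v : V) :
    trailSrc sE v (x.trunc (k + 1)) = sE (x.1 0) := by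
  induction k generalizing v with
  | zero => rw [x.trunc_succ 0, x.trunc_zero, trailSrc_single]
  | succ j ih => rw [x.trunc_succ (j + 1), trailSrc_cons, ih]

/-- Prepend an edge at the right end of a left-infinite path. -/
def LeftPath.push (z : LeftPath rE sE) (a : E) (h : sE (z.1 0) = rE a) :
    LeftPath rE sE :=
  ⟨fun m => Nat.casesOn m a (fun k => z.1 k), by
    intro k
    cases k with
    | zero => exact h
    | succ j => exact z.2 j⟩

lemma LeftPath.push_trunc (z : LeftPath rE sE) (a : E) (h : sE (z.1 0) = rE a)
    (k : ℕ) : (z.push a h).trunc (k + 1) = z.trunc k ++ [a] := by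
  induction k with
  | zero => rw [LeftPath.trunc_succ, LeftPath.trunc_zero]; rfl
  | succ j ih =>
    rw [LeftPath.trunc_succ, ih, LeftPath.trunc_succ]
    rfl

/-- Append a finite path at the right end of a left-infinite path. -/
def LeftPath.extend (z : LeftPath rE sE) :
    (l : List E) → FromV rE sE (sE (z.1 0)) l → LeftPath rE sE
  | [], _ => z
  | a :: l, h =>
    LeftPath.extend (z.push a (fromV_cons.mp h).1.symm) l (fromV_cons.mp h).2

lemma LeftPath.extend_trunc_add (z : LeftPath rE sE) :
    ∀ (l : List E) (h : FromV rE sE (sE (z.1 0)) l) (k : ℕ),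
      (z.extend l h).trunc (l.length + k) = z.trunc k ++ l := by
  intro l
  induction l generalizing z with
  | nil => intro h k; simp [LeftPath.extend]
  | cons a l ih =>
    intro h k
    show (LeftPath.extend _ l _).trunc ((a :: l).length + k) = z.trunc k ++ (a :: l)
    have hlen : (a :: l).length + k = l.length + (k + 1) := by
      simp [List.length_cons]; omega
    rw [hlen]
    refine (ih _ _ (k + 1)).trans ?_
    rw [LeftPath.push_trunc]
    simp

lemma LeftPath.extend_trunc_self (z : LeftPath rE sE) (l : List E)
    (h : FromV rE sE (sE (z.1 0)) l) : (z.extend l h).trunc l.length = l := by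
  have := z.extend_trunc_add l h 0
  simpa [LeftPath.trunc_zero] using this

lemma LeftPath.extend_trunc_le (z : LeftPath rE sE) :
    ∀ (l : List E) (h : FromV rE sE (sE (z.1 0)) l) (n : ℕ), n ≤ l.length →
      (z.extend l h).trunc n = l.drop (l.length - n) := by
  intro l
  induction l generalizing z with
  | nil =>
    intro h n hn
    have hn0 : n = 0 := Nat.le_zero.mp hn
    subst hn0
    rfl
  | cons a l ih =>
    intro h n hn
    rcases Nat.lt_or_ge n ((a :: l).length) with hlt | hge
    · have hn' : n ≤ l.length := by simp at hlt; omega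
      show (LeftPath.extend _ l _).trunc n = _
      refine (ih _ _ n hn').trans ?_
      have : (a :: l).length - n = (l.length - n) + 1 := by
        simp [List.length_cons]; omega
      rw [this, List.drop_succ_cons]
    · have hn' : n = (a :: l).length := le_antisymm hn hge
      subst hn'
      rw [LeftPath.extend_trunc_self]
      simp

lemma LeftPath.extend_val_add (z : LeftPath rE sE) :
    ∀ (l : List E) (h : FromV rE sE (sE (z.1 0)) l) (m : ℕ),
      (z.extend l h).1 (l.length + m) = z.1 m := by
  intro l
  induction l generalizing z with
  | nil => intro h m; simp [LeftPath.extend]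
  | cons a l ih =>
    intro h m
    show (LeftPath.extend _ l _).1 ((a :: l).length + m) = z.1 m
    have hlen : (a :: l).length + m = l.length + (m + 1) := by
      simp [List.length_cons]; omega
    rw [hlen]
    refine (ih _ _ (m + 1)).trans ?_
    rfl

end Paths

/-- if a nucleus element maps `μ` to `ν`, then the images in the
limit space of the cylinders `Z(μ]` and `Z(ν]` intersect. -/
theorem cylinder_images_intersect
    [Fintype V] [Fintype E] (rE sE : E → V) (A : SSA V E rE sE)
    (hA : A.Contracting) (g : A.G) (hg : g ∈ A.nucleus)
    (μ ν : List E) (hμ : FromV rE sE (A.d g) μ) (hν : A.act g μ = ν) :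
    ∃ x y : LeftPath rE sE, x ∈ cylL rE sE μ ∧ y ∈ cylL rE sE ν ∧
      Quot.mk A.AsympEq x = Quot.mk A.AsympEq y := by
  classical
  obtain ⟨F, hF⟩ := hA
  have hSfin : (A.resSet F).Finite := A.resSet_finite hF
  have hScore : A.IsCore (A.resSet F) := A.resSet_core hF
  have hcl : ∀ h ∈ A.resSet F, ∀ l, FromV rE sE (A.d h) l →
      A.res h l ∈ A.resSet F := fun h hh l hl => A.resSet_closed hh hl
  have hPcore : A.IsCore (A.persist (A.resSet F)) :=
    A.persist_core hSfin hScore.2 hcl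
  have hgP : g ∈ A.persist (A.resSet F) :=
    Set.mem_sInter.mp hg _ hPcore
  -- backstep chain through the persistent part of the core
  have bs : ∀ h : {h : A.G // h ∈ A.persist (A.resSet F)},
      ∃ q : {h' : A.G // h' ∈ A.persist (A.resSet F)} × E,
        rE q.2 = A.d q.1.1 ∧ A.res q.1.1 [q.2] = h.1 := by
    intro h
    obtain ⟨p, hp, e, he1, he2⟩ := A.persist_backstep hSfin hcl h.2
    exact ⟨(⟨p, hp⟩, e), he1, he2⟩
  choose step hstep1 hstep2 using bs
  let seq : ℕ → {h : A.G // h ∈ A.persist (A.resSet F)} :=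
    fun k => Nat.rec ⟨g, hgP⟩ (fun _ p => (step p).1) k
  let fe : ℕ → E := fun k => (step (seq k)).2
  have hseqS : ∀ k, (seq k).1 ∈ A.resSet F := fun k => (seq k).2.1
  have hres : ∀ k, A.res (seq (k + 1)).1 [fe k] = (seq k).1 :=
    fun k => hstep2 (seq k)
  have hrange : ∀ k, rE (fe k) = A.d (seq (k + 1)).1 := fun k => hstep1 (seq k)
  have hfv : ∀ k, FromV rE sE (A.d (seq (k + 1)).1) [fe k] :=
    fun k => fromV_single.mpr (hrange k)
  have hdsrc : ∀ k, A.d (seq k).1 = sE (fe k) := by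
    intro k
    rw [← hres k, A.d_res _ _ (hfv k), trailSrc_single]
  have hact1 : ∀ k, ∃ e : E, A.act (seq (k + 1)).1 [fe k] = [e] := by
    intro k
    apply length_one_eq
    rw [A.act_length _ _ (hfv k)]
    rfl
  choose ee hee using hact1
  have heer : ∀ k, rE (ee k) = A.c (seq (k + 1)).1 := by
    intro k
    have h5 := A.act_fromV _ _ (hfv k)
    rw [hee k] at h5
    exact fromV_single.mp h5
  have hees : ∀ k, sE (ee k) = A.c (seq k).1 := by
    intro k
    rw [← hres k, A.c_res _ _ (hfv k), hee k, trailSrc_single]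
  -- the two base left-infinite paths
  let z : LeftPath rE sE :=
    ⟨fe, fun k => (hdsrc (k + 1)).symm.trans (hrange k).symm⟩
  let z' : LeftPath rE sE :=
    ⟨ee, fun k => (hees (k + 1)).trans (heer k).symm⟩
  have hμ' : FromV rE sE (sE (z.1 0)) μ := by
    show FromV rE sE (sE (fe 0)) μ
    rw [← hdsrc 0]
    exact hμ
  have hνF : FromV rE sE (A.c g) ν := by
    rw [← hν]
    exact A.act_fromV g μ hμ
  have hν' : FromV rE sE (sE (z'.1 0)) ν := by
    show FromV rE sE (sE (ee 0)) ν
    rw [hees 0]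
    exact hνF
  have hLν : ν.length = μ.length := by
    rw [← hν, A.act_length g μ hμ]
  refine ⟨z.extend μ hμ', z'.extend ν hν', z.extend_trunc_self μ hμ',
    z'.extend_trunc_self ν hν', Quot.sound ?_⟩
  -- the sequence witnessing asymptotic equivalence
  refine ⟨fun m => if m < μ.length then A.res g (μ.take (μ.length - (m + 1)))
    else (seq (m + 1 - μ.length)).1, ?_, ?_, ?_⟩
  · -- finitely many values
    apply Set.Finite.subset
      (((Set.finite_Iic μ.length).image
        (fun j => A.res g (μ.take j))).union hSfin)
    rintro h ⟨m, rfl⟩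
    by_cases hm : m < μ.length
    · refine Or.inl ⟨μ.length - (m + 1), by simp, ?_⟩
      simp [hm]
    · refine Or.inr ?_
      simp only [hm, if_false]
      exact hseqS _
  · -- domains match
    intro m
    by_cases hm : m < μ.length
    · simp only [if_pos hm]
      obtain ⟨hs1, hs2, hs3, hs4⟩ := A.split g μ (μ.length - (m + 1)) hμ
      have hxt : (z.extend μ hμ').trunc (m + 1) =
          μ.drop (μ.length - (m + 1)) :=
        z.extend_trunc_le μ hμ' (m + 1) (by omega)
      have hhd : (μ.drop (μ.length - (m + 1))).head? =
          some ((z.extend μ hμ').1 m) := by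
        rw [← hxt, LeftPath.trunc_succ]
        rfl
      rw [A.d_res g _ hs1]
      exact trailSrc_take hμ hhd
    · simp only [if_neg hm]
      have hxv := z.extend_val_add μ hμ' (m - μ.length)
      rw [show μ.length + (m - μ.length) = m from by omega] at hxv
      rw [hxv, show m + 1 - μ.length = (m - μ.length) + 1 from by omega]
      exact (hrange (m - μ.length)).symm
  · -- actions match
    have hM : ∀ k, A.act (seq k).1 (z.trunc k ++ μ) = z'.trunc k ++ ν := by
      intro k
      induction k with
      | zero =>
        show A.act g (z.trunc 0 ++ μ) = z'.trunc 0 ++ ν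
        rw [LeftPath.trunc_zero, LeftPath.trunc_zero, List.nil_append,
          List.nil_append]
        exact hν
      | succ k ih =>
        have hw : FromV rE sE (A.d (seq k).1) (z.trunc k ++ μ) := by
          refine fromV_append.mpr ⟨?_, ?_⟩
          · cases k with
            | zero => exact fromV_nil _
            | succ j =>
              have h5 : FromV rE sE (rE (fe j)) (z.trunc (j + 1)) :=
                z.trunc_fromV j
              rwa [hrange j] at h5
          · cases k with
            | zero =>
              rw [LeftPath.trunc_zero, trailSrc_nil]
              exact hμ
            | succ j =>
              rw [z.trunc_trailSrc j]
              show FromV rE sE (sE (fe 0)) μ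
              rw [← hdsrc 0]
              exact hμ
        calc A.act (seq (k + 1)).1 (z.trunc (k + 1) ++ μ)
            = A.act (seq (k + 1)).1 ([fe k] ++ (z.trunc k ++ μ)) := by
              rw [LeftPath.trunc_succ]
              rfl
          _ = A.act (seq (k + 1)).1 [fe k] ++
              A.act (A.res (seq (k + 1)).1 [fe k]) (z.trunc k ++ μ) := by
              refine A.act_append _ _ _ (hfv k) ?_
              rw [trailSrc_single, ← hdsrc k]
              exact hw
          _ = [ee k] ++ (z'.trunc k ++ ν) := by rw [hee k, hres k, ih]
          _ = z'.trunc (k + 1) ++ ν := by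
              rw [LeftPath.trunc_succ]
              rfl
    intro m
    by_cases hm : m < μ.length
    · simp only [if_pos hm]
      obtain ⟨hs1, hs2, hs3, hs4⟩ := A.split g μ (μ.length - (m + 1)) hμ
      have hxt : (z.extend μ hμ').trunc (m + 1) =
          μ.drop (μ.length - (m + 1)) :=
        z.extend_trunc_le μ hμ' (m + 1) (by omega)
      have hyt : (z'.extend ν hν').trunc (m + 1) =
          ν.drop (μ.length - (m + 1)) := by
        have h6 := z'.extend_trunc_le ν hν' (m + 1) (by omega)
        rwa [hLν] at h6
      have hlen_take : (A.act g (μ.take (μ.length - (m + 1)))).length =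
          μ.length - (m + 1) := by
        rw [A.act_length g _ hs1, List.length_take]
        omega
      have hdrop : (A.act g (μ.take (μ.length - (m + 1))) ++
          A.act (A.res g (μ.take (μ.length - (m + 1))))
            (μ.drop (μ.length - (m + 1)))).drop (μ.length - (m + 1)) =
          A.act (A.res g (μ.take (μ.length - (m + 1))))
            (μ.drop (μ.length - (m + 1))) :=
        List.drop_left' hlen_take
      rw [hxt, hyt, ← hν, hs4, hdrop]
    · simp only [if_neg hm]
      have h1 : (z.extend μ hμ').trunc (m + 1) =
          z.trunc (m + 1 - μ.length) ++ μ := by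
        have h7 := z.extend_trunc_add μ hμ' (m + 1 - μ.length)
        rwa [show μ.length + (m + 1 - μ.length) = m + 1 from by omega] at h7
      have h2 : (z'.extend ν hν').trunc (m + 1) =
          z'.trunc (m + 1 - μ.length) ++ ν := by
        have h8 := z'.extend_trunc_add ν hν' (m + 1 - μ.length)
        rwa [hLν, show μ.length + (m + 1 - μ.length) = m + 1 from by omega] at h8
      rw [h1, h2]
      exact hM (m + 1 - μ.length)

end SSG
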